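/- Let m be a positive integer or half-integer (2m ∈ ℕ) and s ∈ ℤ + 1/2. Let τ lie in the upper half-plane and z₁, z₂, z ∈ ℂ. Set f_{j,k} := (−1)^j q^{(m+1/2)(j+s/(2m+1))² − k²/(4m)} e^{−2πijm(z₁−z₂)+πik(z₁−z₂)}. Then for either choice of sign: (∑_{j,k∈ℤ, 0≤k<2mj} − ∑_{j,k∈ℤ, 2mj≤k<0}) f_{j,k} θ^{(±)}_{k,m}(τ, z) = − ∑_{r=0}^{2m−1} (∑_{j,p∈ℤ, 0<p≤j} − ∑_{j,p∈ℤ, j<p≤0}) (±1)^p f_{−j, r−2pm} θ^{(±)}_{r,m}(τ, z). -/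

import Mathlib

noncomputable section

open Complex

/-- `e2 w = exp (2 π i w)`; with `q = e^{2πiτ}`, the power `q^x` corresponds to `e2 (x * τ)`. -/
def e2 (w : ℂ) : ℂ := Complex.exp (2 * (Real.pi : ℂ) * Complex.I * w)

/-- Jacobi-type theta function `θ^{(ε)}_{n,m}(τ, z) = ∑_{j∈ℤ} ε^j q^{m(j+n/(2m))²} e^{2πim(j+n/(2m))z}`. -/
def jtheta (ε n m τ z : ℂ) : ℂ :=
  ∑' j : ℤ, ε ^ j *
    e2 (m * ((j : ℂ) + n / (2 * m)) ^ 2 * τ + m * ((j : ℂ) + n / (2 * m)) * z)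

/-- Mock theta function `Φ₁^{(ε)[m,s]}(τ, z₁, z₂)`. -/
def Phi1 (ε m s τ z₁ z₂ : ℂ) : ℂ :=
  ∑' j : ℤ, ε ^ j *
    e2 (m * (j : ℂ) * (z₁ + z₂) + s * z₁ + (m * (j : ℂ) ^ 2 + s * (j : ℂ)) * τ) /
      (1 - e2 (z₁ + (j : ℂ) * τ))

/-- Dedekind eta function `η(τ) = q^{1/24} ∏_{k≥1} (1 - q^k)`. -/
def dedekindEta (τ : ℂ) : ℂ := e2 (τ / 24) * ∏' k : ℕ, (1 - e2 (((k : ℂ) + 1) * τ))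

/-- Jacobi theta `ϑ₁₁(τ, z) = i ∑_{j∈ℤ} (−1)^j q^{(j+1/2)²/2} e^{2πi(j+1/2)z}`. -/
def theta11 (τ z : ℂ) : ℂ :=
  Complex.I * ∑' j : ℤ, (-1 : ℂ) ^ j *
    e2 (((j : ℂ) + 1 / 2) ^ 2 / 2 * τ + ((j : ℂ) + 1 / 2) * z)

/-- Indefinite double sum `(∑_{j,p∈ℤ, 0<p≤j} − ∑_{j,p∈ℤ, j<p≤0}) f j p`. -/
def indefSum (f : ℤ → ℤ → ℂ) : ℂ :=
  ∑' jp : ℤ × ℤ,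
    ((if 0 < jp.2 ∧ jp.2 ≤ jp.1 then f jp.1 jp.2 else 0) -
      (if jp.1 < jp.2 ∧ jp.2 ≤ 0 then f jp.1 jp.2 else 0))

/-- `g^{[m]}_{n,ν}(τ)`. -/
def gfun (m : ℂ) (n ν : ℤ) (τ : ℂ) : ℂ :=
  indefSum fun j p =>
    (-1 : ℂ) ^ j *
      e2 (((m + 1 / 2) * ((j : ℂ) + (ν : ℂ) - ((ν : ℂ) + 1 / 2) / (2 * m + 1)) ^ 2 -
        m * ((p : ℂ) + (ν : ℂ) - (n : ℂ) / (2 * m)) ^ 2) * τ)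

/-- `h^{[m]}_{n,ν}(τ, z)`. -/
def hfun (m : ℂ) (n ν : ℤ) (τ z : ℂ) : ℂ :=
  ∑' j : ℤ,
    e2 (m * (j : ℂ) * z + (n : ℂ) * z / 2 +
        (m * (j : ℂ) ^ 2 + (n : ℂ) * ((j : ℂ) + (ν : ℂ))) * τ) /
      (1 - e2 (m * z + 2 * m * ((j : ℂ) + (ν : ℂ)) * τ))

/-- `G^{[m]}_{n,ν}(τ, z)`. -/
def Gfun (m : ℂ) (n ν : ℤ) (τ z : ℂ) : ℂ :=
  gfun m n ν τ * jtheta 1 (n : ℂ) m τ z +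
    (-1 : ℂ) ^ ν * e2 (-(m * (ν : ℂ) ^ 2) * τ) *
      jtheta (-1) ((ν : ℂ) + 1 / 2) (m + 1 / 2) τ 0 * hfun m n ν τ z

/-- `F^{[m](a,b)}_{n,ν}(τ, z)`. -/
def Ffun (m : ℂ) (a b n ν : ℤ) (τ z : ℂ) : ℂ :=
  e2 ((a : ℂ) * z / 2 + (a : ℂ) ^ 2 / (4 * m) * τ) *
    Gfun m n ν τ (z + (a : ℂ) * τ / m + (b : ℂ) / m)

/-- The coefficient `f_{j,k}` of Lemma 3.1:
`f_{j,k} = (−1)^j q^{(m+1/2)(j+s/(2m+1))² − k²/(4m)} e^{−2πijm(z₁−z₂)+πik(z₁−z₂)}`. -/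
def fcoef (m s τ z₁ z₂ : ℂ) (j k : ℤ) : ℂ :=
  (-1 : ℂ) ^ j *
    e2 (((m + 1 / 2) * ((j : ℂ) + s / (2 * m + 1)) ^ 2 - (k : ℂ) ^ 2 / (4 * m)) * τ +
      (-((j : ℂ) * m) + (k : ℂ) / 2) * (z₁ - z₂))

set_option maxHeartbeats 1000000

lemma norm_e2 (w : ℂ) : ‖e2 w‖ = Real.exp (-(2 * Real.pi * w.im)) := by
  rw [e2, Complex.norm_exp]
  congr 1
  simp [Complex.mul_re, Complex.mul_im]

lemma jtheta_shift (ε : ℂ) (hε : ε = 1 ∨ ε = -1) {M : ℕ} (hM : 0 < M) {m : ℂ}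
    (hm : m = (M:ℂ)/2) (r : ℂ) (p : ℤ) (τ z : ℂ) :
    jtheta ε (r - (p:ℂ) * (M:ℂ)) m τ z = ε ^ p * jtheta ε r m τ z := by
  have hε0 : ε ≠ 0 := by rcases hε with h | h <;> simp [h]
  have hM0 : (M:ℂ) ≠ 0 := Nat.cast_ne_zero.mpr hM.ne'
  have h2m : 2 * m = (M:ℂ) := by rw [hm]; ring
  have key : ∀ j : ℤ, ((j:ℂ) + (r - (p:ℂ)*(M:ℂ)) / (2*m)) = (((j - p : ℤ):ℂ) + r / (2*m)) := by
    intro j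
    push_cast
    rw [h2m]
    field_simp
    ring
  unfold jtheta
  rw [← tsum_mul_left]
  rw [← (Equiv.subRight p).tsum_eq
    (fun j : ℤ => ε ^ p * (ε ^ j * e2 (m * ((j:ℂ) + r / (2*m)) ^ 2 * τ + m * ((j:ℂ) + r / (2*m)) * z)))]
  apply tsum_congr
  intro j
  simp only [Equiv.subRight_apply]
  rw [key j, ← mul_assoc, ← zpow_add₀ hε0]
  norm_num

lemma cond1 {M r p j : ℤ} (hM : 0 < M) (h0 : 0 ≤ r) (h1 : r < M) :
    (0 ≤ r - p * M ∧ r - p * M < M * (-j)) ↔ (j < p ∧ p ≤ 0) := by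
  constructor
  · rintro ⟨ha, hb⟩
    constructor
    · by_contra hc; push_neg at hc
      nlinarith [mul_le_mul_of_nonneg_left (by omega : p - j ≤ 0) hM.le]
    · by_contra hc; push_neg at hc
      nlinarith [mul_le_mul_of_nonneg_left (by omega : (1:ℤ) ≤ p) hM.le]
  · rintro ⟨ha, hb⟩
    constructor
    · nlinarith [mul_le_mul_of_nonneg_left hb hM.le]
    · nlinarith [mul_le_mul_of_nonneg_left (by omega : (1:ℤ) ≤ p - j) hM.le]

lemma cond2 {M r p j : ℤ} (hM : 0 < M) (h0 : 0 ≤ r) (h1 : r < M) :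
    (M * (-j) ≤ r - p * M ∧ r - p * M < 0) ↔ (0 < p ∧ p ≤ j) := by
  constructor
  · rintro ⟨ha, hb⟩
    constructor
    · by_contra hc; push_neg at hc
      nlinarith [mul_le_mul_of_nonneg_left (by omega : p ≤ 0) hM.le]
    · by_contra hc; push_neg at hc
      nlinarith [mul_le_mul_of_nonneg_left (by omega : (1:ℤ) ≤ p - j) hM.le]
  · rintro ⟨ha, hb⟩
    constructor
    · nlinarith [mul_le_mul_of_nonneg_left (by omega : p - j ≤ 0) hM.le]
    · nlinarith [mul_le_mul_of_nonneg_left (by omega : (1:ℤ) ≤ p) hM.le]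

def psiEquiv (M : ℕ) (hM : 0 < M) : (Fin M × ℤ × ℤ) ≃ ℤ × ℤ where
  toFun x := (-x.2.1, (x.1.val : ℤ) - x.2.2 * (M : ℤ))
  invFun y :=
    (⟨(y.2 % (M : ℤ)).toNat, by
      have h0 : (0:ℤ) < (M:ℤ) := by exact_mod_cast hM
      have := Int.emod_nonneg y.2 h0.ne'
      have := Int.emod_lt_of_pos y.2 h0
      omega⟩, -y.1, (y.2 % (M:ℤ) - y.2) / (M:ℤ))
  left_inv := by
    rintro ⟨r, j, p⟩
    have h0 : (0:ℤ) < (M:ℤ) := by exact_mod_cast hM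
    have hr0 : (0:ℤ) ≤ (r.val:ℤ) := Int.natCast_nonneg _
    have hr1 : (r.val:ℤ) < (M:ℤ) := by exact_mod_cast r.2
    have hmod : ((r.val:ℤ) - p * (M:ℤ)) % (M:ℤ) = (r.val:ℤ) := by
      have h2 : ((r.val:ℤ) - p * (M:ℤ)) % (M:ℤ) = ((r.val:ℤ) + (-p) * (M:ℤ)) % (M:ℤ) := by ring_nf
      rw [h2, Int.add_mul_emod_self_right]
      exact Int.emod_eq_of_lt hr0 hr1
    simp only [Prod.mk.injEq, neg_neg]
    refine ⟨?_, trivial, ?_⟩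
    · ext
      simp [hmod]
    · rw [hmod]
      have h3 : (r.val:ℤ) - ((r.val:ℤ) - p * (M:ℤ)) = p * (M:ℤ) := by ring
      rw [h3, Int.mul_ediv_cancel _ h0.ne']
  right_inv := by
    rintro ⟨J, K⟩
    have h0 : (0:ℤ) < (M:ℤ) := by exact_mod_cast hM
    have hnn : (0:ℤ) ≤ K % (M:ℤ) := Int.emod_nonneg K h0.ne'
    simp only [Prod.mk.injEq, neg_neg]
    refine ⟨trivial, ?_⟩
    rw [Int.toNat_of_nonneg hnn]
    have hd : K % (M:ℤ) - K = (-(K / (M:ℤ))) * (M:ℤ) := by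
      rw [Int.emod_def]; ring
    rw [hd, Int.mul_ediv_cancel _ h0.ne']
    have := Int.emod_add_mul_ediv K (M:ℤ)
    linarith [this]

lemma norm_fcoef (M : ℕ) (hM : 0 < M) (S : ℤ) (τ z₁ z₂ : ℂ) (j k : ℤ) :
    ‖fcoef ((M:ℂ)/2) ((S:ℂ) + 1/2) τ z₁ z₂ j k‖ =
      Real.exp (-(2 * Real.pi) *
        ((((M:ℝ)+1)/2 * ((j:ℝ) + ((S:ℝ)+1/2)/((M:ℝ)+1))^2 - (k:ℝ)^2/(2*(M:ℝ))) * τ.im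
          + (-((j:ℝ)*(M:ℝ)/2) + (k:ℝ)/2) * (z₁ - z₂).im)) := by
  have hM0 : ((M:ℝ)) ≠ 0 := Nat.cast_ne_zero.mpr hM.ne'
  have hM1 : ((M:ℝ) + 1) ≠ 0 := by positivity
  set X : ℝ := ((M:ℝ)+1)/2 * ((j:ℝ) + ((S:ℝ)+1/2)/((M:ℝ)+1))^2 - (k:ℝ)^2/(2*(M:ℝ)) with hX
  set Y : ℝ := -((j:ℝ)*(M:ℝ)/2) + (k:ℝ)/2 with hY
  have hcoefX : (((M:ℂ)/2) + 1/2) * ((j:ℂ) + ((S:ℂ)+1/2) / (2 * ((M:ℂ)/2) + 1)) ^ 2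
      - (k:ℂ)^2 / (4 * ((M:ℂ)/2)) = (X:ℂ) := by
    rw [hX]
    push_cast
    have hM0' : ((M:ℂ)) ≠ 0 := Nat.cast_ne_zero.mpr hM.ne'
    have hM1' : ((M:ℂ) + 1) ≠ 0 := by
      intro h
      have h2 : ((M:ℂ)) = -1 := by linear_combination h
      have := congrArg Complex.re h2
      simp at this
      nlinarith [Nat.cast_nonneg (α := ℝ) M]
    field_simp
    ring
  have hcoefY : -((j:ℂ) * ((M:ℂ)/2)) + (k:ℂ)/2 = (Y:ℂ) := by
    rw [hY]; push_cast; ring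
  rw [fcoef, hcoefX, hcoefY, norm_mul, norm_e2]
  have h1 : ‖(-1:ℂ) ^ j‖ = 1 := by
    rw [norm_zpow]; norm_num
  rw [h1, one_mul]
  congr 1
  simp [Complex.add_im, Complex.mul_im]

lemma expo_ineq (Mr aa t u jj kk : ℝ) (hM : 0 < Mr) (ht : 0 < t)
    (hk : kk^2 ≤ Mr^2*jj^2) :
    -(2*Real.pi) * (((Mr+1)/2 * (jj + aa)^2 - kk^2/(2*Mr)) * t + (-(jj*Mr/2) + kk/2) * u)
      ≤ -Real.pi*t*jj^2 + (2*Real.pi*t*(Mr+1)* |aa| + 2*Real.pi* |u| *Mr)* |jj| := by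
  have hπ := Real.pi_pos
  have hX2 : (Mr+1)/2 * (jj + aa)^2 - kk^2/(2*Mr)
      = jj^2/2 + (Mr+1)*aa*jj + (Mr+1)*aa^2/2 + (Mr^2*jj^2 - kk^2)/(2*Mr) := by
    field_simp; ring
  have hpos1 : 0 ≤ (Mr^2*jj^2 - kk^2)/(2*Mr) := div_nonneg (by linarith) (by positivity)
  have hpos2 : 0 ≤ (Mr+1)*aa^2/2 := by positivity
  have haj : -((Mr+1) * (|aa| * |jj|)) ≤ (Mr+1)*(aa*jj) := by
    have h1 : -(|aa| * |jj|) ≤ aa*jj := by rw [← abs_mul]; exact neg_abs_le _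
    nlinarith [h1, hM]
  have hXlb : jj^2/2 - (Mr+1) * |aa| * |jj| ≤ (Mr+1)/2 * (jj + aa)^2 - kk^2/(2*Mr) := by
    rw [hX2]; nlinarith [haj]
  have hkabs : |kk| ≤ Mr * |jj| := by
    apply abs_le_of_sq_le_sq _ (by positivity)
    rw [mul_pow, _root_.sq_abs]; exact hk
  have hYabs : |(-(jj*Mr/2) + kk/2)| ≤ Mr * |jj| := by
    rw [abs_le]
    constructor <;>
      nlinarith [le_abs_self jj, neg_abs_le jj, le_abs_self kk, neg_abs_le kk, hkabs,
        mul_le_mul_of_nonneg_right (le_abs_self jj) hM.le,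
        mul_le_mul_of_nonneg_right (neg_abs_le jj) hM.le]
  have hYu : -(Mr * |jj| * |u|) ≤ (-(jj*Mr/2) + kk/2) * u := by
    have h1 : |(-(jj*Mr/2) + kk/2) * u| ≤ (Mr * |jj|) * |u| := by
      rw [abs_mul]
      exact mul_le_mul_of_nonneg_right hYabs (abs_nonneg u)
    have h2 := neg_abs_le ((-(jj*Mr/2) + kk/2) * u)
    linarith
  have h2 := mul_le_mul_of_nonneg_left hXlb (by positivity : (0:ℝ) ≤ 2*Real.pi*t)
  have h3 := mul_le_mul_of_nonneg_left hYu (by positivity : (0:ℝ) ≤ 2*Real.pi)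
  nlinarith [h2, h3]

theorem stmt_6 (M : ℕ) (hM : 0 < M) (m : ℂ) (hm : m = (M : ℂ) / 2)
    (S : ℤ) (s : ℂ) (hs : s = (S : ℂ) + 1 / 2)
    (τ : ℂ) (hτ : 0 < τ.im) (z₁ z₂ z : ℂ)
    (ε : ℂ) (hε : ε = 1 ∨ ε = -1) :
    (∑' jk : ℤ × ℤ,
        ((if 0 ≤ jk.2 ∧ jk.2 < (M : ℤ) * jk.1 then
            fcoef m s τ z₁ z₂ jk.1 jk.2 * jtheta ε (jk.2 : ℂ) m τ z else 0) -
          (if (M : ℤ) * jk.1 ≤ jk.2 ∧ jk.2 < 0 then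
            fcoef m s τ z₁ z₂ jk.1 jk.2 * jtheta ε (jk.2 : ℂ) m τ z else 0))) =
      -∑ r ∈ Finset.range M,
        (indefSum fun j p => ε ^ p * fcoef m s τ z₁ z₂ (-j) ((r : ℤ) - p * (M : ℤ))) *
          jtheta ε (r : ℂ) m τ z := by

  classical
  subst hm
  subst hs
  have hεzn : ∀ p : ℤ, ‖ε ^ p‖ = 1 := fun p => by
    rw [norm_zpow]
    rcases hε with h | h <;> simp [h]
  have hMR : (0:ℝ) < (M:ℝ) := by exact_mod_cast hM
  set C : ℝ := ∑ r ∈ Finset.range M, ‖jtheta ε (r : ℂ) ((M:ℂ)/2) τ z‖ with hC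
  clear_value C
  have hC0 : 0 ≤ C := by
    rw [hC]; exact Finset.sum_nonneg fun _ _ => norm_nonneg _
  set c : ℝ := 2*Real.pi*τ.im*((M:ℝ)+1)* |((S:ℝ)+1/2)/((M:ℝ)+1)| + 2*Real.pi* |(z₁-z₂).im| *(M:ℝ)
    with hc
  clear_value c
  -- uniform bound on theta values
  have hthetale : ∀ k : ℤ, ‖jtheta ε (k : ℂ) ((M:ℂ)/2) τ z‖ ≤ C := by
    intro k
    have h0 : (0:ℤ) < (M:ℤ) := by exact_mod_cast hM
    have hnn : (0:ℤ) ≤ k % (M:ℤ) := Int.emod_nonneg k h0.ne'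
    have hlt : k % (M:ℤ) < (M:ℤ) := Int.emod_lt_of_pos k h0
    have hkeq : (k:ℂ) = ((k % (M:ℤ) : ℤ):ℂ) - ((-(k / (M:ℤ)) : ℤ):ℂ) * (M:ℂ) := by
      have h4 := Int.emod_add_mul_ediv k (M:ℤ)
      have h2 : (k:ℂ) = ((k % (M:ℤ) + (M:ℤ) * (k / (M:ℤ)) : ℤ):ℂ) := by rw [h4]
      rw [h2]; push_cast; ring
    rw [hkeq, jtheta_shift ε hε hM rfl _ _ τ z, norm_mul, hεzn, one_mul]
    rw [show ((k % (M:ℤ) : ℤ):ℂ) = (((k % (M:ℤ)).toNat : ℕ) : ℂ) by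
      exact_mod_cast congrArg (fun n : ℤ => (n:ℂ)) (Int.toNat_of_nonneg hnn).symm]
    rw [hC]
    apply Finset.single_le_sum (f := fun r : ℕ => ‖jtheta ε (r : ℂ) ((M:ℂ)/2) τ z‖)
      (fun _ _ => norm_nonneg _)
    rw [Finset.mem_range]
    omega
  -- termwise bound
  have hterm : ∀ j k : ℤ, (k:ℝ)^2 ≤ (M:ℝ)^2 * (j:ℝ)^2 →
      ‖fcoef ((M:ℂ)/2) ((S:ℂ)+1/2) τ z₁ z₂ j k * jtheta ε (k : ℂ) ((M:ℂ)/2) τ z‖ ≤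
        C * Real.exp (-Real.pi*τ.im*(j:ℝ)^2 + c* |(j:ℝ)|) := by
    intro j k hk
    rw [norm_mul, norm_fcoef M hM S τ z₁ z₂ j k]
    have hexp := expo_ineq (M:ℝ) (((S:ℝ)+1/2)/((M:ℝ)+1)) τ.im (z₁-z₂).im (j:ℝ) (k:ℝ) hMR hτ hk
    calc _ ≤ Real.exp (-Real.pi*τ.im*(j:ℝ)^2 + c* |(j:ℝ)|) * C := by
          apply mul_le_mul _ (hthetale k) (norm_nonneg _) (Real.exp_pos _).le
          rw [Real.exp_le_exp, hc]
          exact hexp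
      _ = C * Real.exp (-Real.pi*τ.im*(j:ℝ)^2 + c* |(j:ℝ)|) := by ring
  -- region implies k² ≤ M²j²
  have hregion : ∀ j k : ℤ, ((0 ≤ k ∧ k < (M:ℤ)*j) ∨ ((M:ℤ)*j ≤ k ∧ k < 0)) →
      (k:ℝ)^2 ≤ (M:ℝ)^2 * (j:ℝ)^2 := by
    intro j k h
    have h2 : k^2 ≤ ((M:ℤ))^2 * j^2 := by
      rcases h with ⟨h1, h2⟩ | ⟨h1, h2⟩ <;> nlinarith
    exact_mod_cast h2
  -- the dominating function
  set D : ℤ → ℝ := fun j => C * Real.exp (-Real.pi*τ.im*(j:ℝ)^2 + c* |(j:ℝ)|) with hD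
  clear_value D
  have hD0 : ∀ j, 0 ≤ D j := fun j => by
    rw [hD]; exact mul_nonneg hC0 (Real.exp_pos _).le
  set H : ℤ × ℤ → ℝ := fun jk =>
    if (0 ≤ jk.2 ∧ jk.2 < (M:ℤ)*jk.1) ∨ ((M:ℤ)*jk.1 ≤ jk.2 ∧ jk.2 < 0) then D jk.1 else 0
    with hH
  clear_value H
  have hH0 : ∀ jk, 0 ≤ H jk := by
    intro jk
    rw [hH]
    dsimp only
    split <;> [exact hD0 _; exact le_refl 0]
  -- fiberwise finite support
  have hzero : ∀ j : ℤ, ∀ k ∉ Finset.Ico (min 0 ((M:ℤ)*j)) (max 0 ((M:ℤ)*j)), H (j, k) = 0 := by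
    intro j k hk
    rw [Finset.mem_Ico] at hk
    rw [hH]
    dsimp only
    rw [if_neg]
    intro h
    rcases h with ⟨h1, h2⟩ | ⟨h1, h2⟩ <;> omega
  -- row sums
  have hrow : ∀ j : ℤ, ∑' k : ℤ, H (j, k) ≤ ((M:ℝ) * |(j:ℝ)|) * D j := by
    intro j
    rw [tsum_eq_sum (hzero j)]
    have hcard : ((Finset.Ico (min 0 ((M:ℤ)*j)) (max 0 ((M:ℤ)*j))).card : ℝ) ≤ (M:ℝ) * |(j:ℝ)| := by
      rw [Int.card_Ico]
      have h1 : max 0 ((M:ℤ)*j) - min 0 ((M:ℤ)*j) = |(M:ℤ)*j| := by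
        rcases le_total 0 ((M:ℤ)*j) with h | h
        · rw [max_eq_right h, min_eq_left h, _root_.abs_of_nonneg h]; ring
        · rw [max_eq_left h, min_eq_right h, _root_.abs_of_nonpos h]; ring
      rw [h1]
      have h2 : ((|(M:ℤ)*j|.toNat : ℕ) : ℝ) = |((M:ℝ)*(j:ℝ))| := by
        have h3 : ((|(M:ℤ)*j|.toNat : ℕ) : ℤ) = |(M:ℤ)*j| := Int.toNat_of_nonneg (abs_nonneg _)
        have h4 : ((|(M:ℤ)*j|.toNat : ℕ) : ℝ) = ((|(M:ℤ)*j| : ℤ) : ℝ) := by exact_mod_cast congrArg (fun x : ℤ => (x:ℝ)) h3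
        rw [h4, Int.cast_abs]
        push_cast
        ring_nf
      rw [h2, _root_.abs_mul, _root_.abs_of_nonneg hMR.le]
    calc ∑ k ∈ Finset.Ico (min 0 ((M:ℤ)*j)) (max 0 ((M:ℤ)*j)), H (j, k)
        ≤ (Finset.Ico (min 0 ((M:ℤ)*j)) (max 0 ((M:ℤ)*j))).card • D j := by
          apply Finset.sum_le_card_nsmul
          intro x _
          rw [hH]; dsimp only; split <;> [exact le_refl _; exact hD0 _]
      _ = ((Finset.Ico (min 0 ((M:ℤ)*j)) (max 0 ((M:ℤ)*j))).card : ℝ) * D j := by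
          rw [nsmul_eq_mul]
      _ ≤ ((M:ℝ) * |(j:ℝ)|) * D j := by
          apply mul_le_mul_of_nonneg_right hcard (hD0 j)
  -- summability of row bounds
  have hRB : Summable (fun j : ℤ => ((M:ℝ) * |(j:ℝ)|) * D j) := by
    have hNat : Summable (fun n : ℕ => ((M:ℝ) * (n:ℝ)) * (C * Real.exp (-Real.pi*τ.im*(n:ℝ)^2 + c*(n:ℝ)))) := by
      have hy : ‖Real.exp (-(Real.pi*τ.im)/2)‖ < 1 := by
        rw [Real.norm_eq_abs, abs_of_pos (Real.exp_pos _), Real.exp_lt_one_iff]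
        have := Real.pi_pos
        nlinarith
      have hgeo := (summable_pow_mul_geometric_of_norm_lt_one (R := ℝ) 1 hy).mul_left
        ((M:ℝ) * C * Real.exp (c^2/(2*Real.pi*τ.im)))
      apply Summable.of_nonneg_of_le _ _ hgeo
      · intro n
        positivity
      · intro n
        have hn2 : (n:ℝ) ≤ (n:ℝ)^2 := by
          have : n ≤ n^2 := Nat.le_self_pow two_ne_zero n
          exact_mod_cast this
        have hdiv : c^2/(2*Real.pi*τ.im)*(2*Real.pi*τ.im) = c^2 := by
          field_simp
        have hexply : Real.exp (-Real.pi*τ.im*(n:ℝ)^2 + c*(n:ℝ)) ≤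
            Real.exp (c^2/(2*Real.pi*τ.im)) * Real.exp (-(Real.pi*τ.im)/2) ^ n := by
          rw [← Real.exp_nat_mul, ← Real.exp_add, Real.exp_le_exp, ← sub_le_iff_le_add,
            le_div_iff₀ (by positivity : (0:ℝ) < 2*Real.pi*τ.im)]
          have e1 : 0 ≤ c^2 - 2*(Real.pi*τ.im)*c*(n:ℝ) + (Real.pi*τ.im)^2*(n:ℝ)^2 := by
            nlinarith [sq_nonneg (c - Real.pi*τ.im*(n:ℝ))]
          have e2 : (Real.pi*τ.im)^2*(n:ℝ) ≤ (Real.pi*τ.im)^2*(n:ℝ)^2 :=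
            mul_le_mul_of_nonneg_left hn2 (by positivity)
          nlinarith [e1, e2]
        calc ((M:ℝ) * (n:ℝ)) * (C * Real.exp (-Real.pi*τ.im*(n:ℝ)^2 + c*(n:ℝ)))
            ≤ ((M:ℝ) * (n:ℝ)) * (C * (Real.exp (c^2/(2*Real.pi*τ.im)) * Real.exp (-(Real.pi*τ.im)/2) ^ n)) := by
              apply mul_le_mul_of_nonneg_left (mul_le_mul_of_nonneg_left hexply hC0) (by positivity)
          _ = ((M:ℝ) * C * Real.exp (c^2/(2*Real.pi*τ.im))) * ((n:ℝ)^1 * Real.exp (-(Real.pi*τ.im)/2) ^ n) := by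
              ring
    apply Summable.of_nat_of_neg
    · apply hNat.congr
      intro n
      rw [hD]
      dsimp only
      push_cast
      rw [_root_.abs_of_nonneg (Nat.cast_nonneg n)]
    · apply hNat.congr
      intro n
      rw [hD]
      dsimp only
      push_cast
      rw [_root_.abs_neg, _root_.abs_of_nonneg (Nat.cast_nonneg n), neg_sq]
  -- summability of H
  have hHsum : Summable H := by
    apply (summable_prod_of_nonneg hH0).mpr
    constructor
    · intro j
      exact summable_of_ne_finset_zero (hzero j)
    · apply Summable.of_nonneg_of_le _ hrow hRB
      intro j
      exact tsum_nonneg fun k => hH0 (j, k)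
  -- summability of the two indicator pieces
  have hs1 : Summable (fun jk : ℤ × ℤ =>
      if 0 ≤ jk.2 ∧ jk.2 < (M:ℤ)*jk.1 then
        fcoef ((M:ℂ)/2) ((S:ℂ)+1/2) τ z₁ z₂ jk.1 jk.2 * jtheta ε (jk.2 : ℂ) ((M:ℂ)/2) τ z else 0) := by
    apply Summable.of_norm_bounded hHsum
    intro jk
    rw [hH]
    dsimp only
    split_ifs with h1 h2 h2
    · rw [hD]; exact hterm jk.1 jk.2 (hregion jk.1 jk.2 (Or.inl h1))
    · exact absurd (Or.inl h1) h2
    · simp [hD0]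
    · simp
  have hs2 : Summable (fun jk : ℤ × ℤ =>
      if (M:ℤ)*jk.1 ≤ jk.2 ∧ jk.2 < 0 then
        fcoef ((M:ℂ)/2) ((S:ℂ)+1/2) τ z₁ z₂ jk.1 jk.2 * jtheta ε (jk.2 : ℂ) ((M:ℂ)/2) τ z else 0) := by
    apply Summable.of_norm_bounded hHsum
    intro jk
    rw [hH]
    dsimp only
    split_ifs with h1 h2 h2
    · rw [hD]; exact hterm jk.1 jk.2 (hregion jk.1 jk.2 (Or.inr h1))
    · exact absurd (Or.inr h1) h2
    · simp [hD0]
    · simp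
  have hsum : Summable (fun jk : ℤ × ℤ =>
      (if 0 ≤ jk.2 ∧ jk.2 < (M:ℤ)*jk.1 then
          fcoef ((M:ℂ)/2) ((S:ℂ)+1/2) τ z₁ z₂ jk.1 jk.2 * jtheta ε (jk.2 : ℂ) ((M:ℂ)/2) τ z else 0) -
        (if (M:ℤ)*jk.1 ≤ jk.2 ∧ jk.2 < 0 then
          fcoef ((M:ℂ)/2) ((S:ℂ)+1/2) τ z₁ z₂ jk.1 jk.2 * jtheta ε (jk.2 : ℂ) ((M:ℂ)/2) τ z else 0)) :=
    hs1.sub hs2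
  -- reindex via psiEquiv
  rw [← (psiEquiv M hM).tsum_eq (fun jk : ℤ × ℤ =>
      (if 0 ≤ jk.2 ∧ jk.2 < (M:ℤ)*jk.1 then
          fcoef ((M:ℂ)/2) ((S:ℂ)+1/2) τ z₁ z₂ jk.1 jk.2 * jtheta ε (jk.2 : ℂ) ((M:ℂ)/2) τ z else 0) -
        (if (M:ℤ)*jk.1 ≤ jk.2 ∧ jk.2 < 0 then
          fcoef ((M:ℂ)/2) ((S:ℂ)+1/2) τ z₁ z₂ jk.1 jk.2 * jtheta ε (jk.2 : ℂ) ((M:ℂ)/2) τ z else 0))]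
  have hsum2 : Summable (fun σ : Fin M × ℤ × ℤ =>
      (fun jk : ℤ × ℤ =>
      (if 0 ≤ jk.2 ∧ jk.2 < (M:ℤ)*jk.1 then
          fcoef ((M:ℂ)/2) ((S:ℂ)+1/2) τ z₁ z₂ jk.1 jk.2 * jtheta ε (jk.2 : ℂ) ((M:ℂ)/2) τ z else 0) -
        (if (M:ℤ)*jk.1 ≤ jk.2 ∧ jk.2 < 0 then
          fcoef ((M:ℂ)/2) ((S:ℂ)+1/2) τ z₁ z₂ jk.1 jk.2 * jtheta ε (jk.2 : ℂ) ((M:ℂ)/2) τ z else 0))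
        (psiEquiv M hM σ)) :=
    hsum.comp_injective (psiEquiv M hM).injective
  rw [Summable.tsum_prod hsum2, tsum_fintype]
  conv_rhs => rw [← Fin.sum_univ_eq_sum_range
    (fun r => (indefSum fun j p => ε ^ p * fcoef ((M:ℂ)/2) ((S:ℂ)+1/2) τ z₁ z₂ (-j) ((r : ℤ) - p * (M : ℤ))) *
          jtheta ε (r : ℂ) ((M:ℂ)/2) τ z)]
  rw [← Finset.sum_neg_distrib]
  apply Finset.sum_congr rfl
  intro r _
  have hr0 : (0:ℤ) ≤ (r.val:ℤ) := Int.natCast_nonneg _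
  have hr1 : (r.val:ℤ) < (M:ℤ) := by exact_mod_cast r.2
  have hth : ∀ p : ℤ, jtheta ε (((r.val:ℤ) - p*(M:ℤ) : ℤ):ℂ) ((M:ℂ)/2) τ z
      = ε ^ p * jtheta ε ((r.val:ℕ):ℂ) ((M:ℂ)/2) τ z := by
    intro p
    rw [show (((r.val:ℤ) - p*(M:ℤ) : ℤ):ℂ) = ((r.val:ℕ):ℂ) - (p:ℂ) * (M:ℂ) by push_cast; ring]
    exact jtheta_shift ε hε hM rfl _ p τ z
  have hptw : ∀ cc : ℤ × ℤ,
      (fun jk : ℤ × ℤ =>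
      (if 0 ≤ jk.2 ∧ jk.2 < (M:ℤ)*jk.1 then
          fcoef ((M:ℂ)/2) ((S:ℂ)+1/2) τ z₁ z₂ jk.1 jk.2 * jtheta ε (jk.2 : ℂ) ((M:ℂ)/2) τ z else 0) -
        (if (M:ℤ)*jk.1 ≤ jk.2 ∧ jk.2 < 0 then
          fcoef ((M:ℂ)/2) ((S:ℂ)+1/2) τ z₁ z₂ jk.1 jk.2 * jtheta ε (jk.2 : ℂ) ((M:ℂ)/2) τ z else 0))
        (psiEquiv M hM (r, cc))
      = -(((if 0 < cc.2 ∧ cc.2 ≤ cc.1 then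
            ε ^ cc.2 * fcoef ((M:ℂ)/2) ((S:ℂ)+1/2) τ z₁ z₂ (-cc.1) ((r.val:ℤ) - cc.2*(M:ℤ)) else 0) -
          (if cc.1 < cc.2 ∧ cc.2 ≤ 0 then
            ε ^ cc.2 * fcoef ((M:ℂ)/2) ((S:ℂ)+1/2) τ z₁ z₂ (-cc.1) ((r.val:ℤ) - cc.2*(M:ℤ)) else 0)) *
          jtheta ε ((r.val:ℕ):ℂ) ((M:ℂ)/2) τ z) := by
    intro cc
    show (if 0 ≤ (r.val:ℤ) - cc.2*(M:ℤ) ∧ (r.val:ℤ) - cc.2*(M:ℤ) < (M:ℤ) * (-cc.1) then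
            fcoef ((M:ℂ)/2) ((S:ℂ)+1/2) τ z₁ z₂ (-cc.1) ((r.val:ℤ) - cc.2*(M:ℤ)) *
              jtheta ε (((r.val:ℤ) - cc.2*(M:ℤ) : ℤ):ℂ) ((M:ℂ)/2) τ z else 0) -
          (if (M:ℤ) * (-cc.1) ≤ (r.val:ℤ) - cc.2*(M:ℤ) ∧ (r.val:ℤ) - cc.2*(M:ℤ) < 0 then
            fcoef ((M:ℂ)/2) ((S:ℂ)+1/2) τ z₁ z₂ (-cc.1) ((r.val:ℤ) - cc.2*(M:ℤ)) *
              jtheta ε (((r.val:ℤ) - cc.2*(M:ℤ) : ℤ):ℂ) ((M:ℂ)/2) τ z else 0) = _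
    rw [hth cc.2]
    rw [if_congr (cond1 (by exact_mod_cast hM) hr0 hr1) rfl rfl,
      if_congr (cond2 (by exact_mod_cast hM) hr0 hr1) rfl rfl]
    split_ifs with h1 h2 h2
    · exact absurd h1.2 (by omega)
    · ring
    · ring
    · ring
  rw [tsum_congr hptw, tsum_neg, tsum_mul_right]
  rfl
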